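/- For every n ≥ 1 there exists a pushdown automaton with 3n+3 states and two stack symbols, whose language is exactly the set of words of length 2^{n+1} over a designated input alphabet Γ₂, and whose stack height never exceeds n along any accepting run. -/
import Mathlib


/-- A stack operation of a pushdown automaton. -/
inductive StackOp (Γ : Type*) where
  | push (γ : Γ)
  | pop (γ : Γ)
  | nop

/-- The effect of a stack operation: `op.apply s s'` means performing `op`
on stack `s` yields stack `s'`. -/
def StackOp.apply {Γ : Type*} : StackOp Γ → List Γ → List Γ → Prop
  | .push γ, s, s' => s' = γ :: s
  | .pop γ, s, s' => s = γ :: s'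
  | .nop, s, s' => s' = s

/-- A pushdown automaton with states `Q`, stack symbols `Γ` and input alphabet `σ`.
Transitions read a letter or `ε` (`Option σ`) and perform one stack operation. -/
structure PDA (Q Γ σ : Type*) where
  trans : Set (Q × Option σ × StackOp Γ × Q)
  start : Q
  final : Set Q

/-- `P.Steps c w c' h` : there is a run of `P` from configuration `c` to `c'`
reading the word `w`, whose maximal stack height (over all configurations
of the run, endpoints included) is `h`. -/
inductive PDA.Steps {Q Γ σ : Type*} (P : PDA Q Γ σ) :
    Q × List Γ → List σ → Q × List Γ → ℕ → Prop where
  | refl (c : Q × List Γ) : PDA.Steps P c [] c c.2.length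
  | step {q q' : Q} {a : Option σ} {op : StackOp Γ} {s s' : List Γ}
      {w : List σ} {c : Q × List Γ} {h : ℕ} :
      (q, a, op, q') ∈ P.trans → op.apply s s' →
      PDA.Steps P (q', s') w c h →
      PDA.Steps P (q, s) (a.toList ++ w) c (max s.length h)

/-- The language of a PDA: acceptance by final state and empty stack,
starting from the initial state with empty stack. -/
def PDA.language {Q Γ σ : Type*} (P : PDA Q Γ σ) : Set (List σ) :=
  {w | ∃ f ∈ P.final, ∃ h, P.Steps (P.start, []) w (f, []) h}

section Aux

variable {Q Q' Γ σ : Type*}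

lemma PDA.Steps.start_le {P : PDA Q Γ σ} {c c' : Q × List Γ} {w : List σ} {h : ℕ}
    (hs : P.Steps c w c' h) : c.2.length ≤ h := by
  cases hs with
  | refl c => exact le_rfl
  | step ht ha hs => exact le_max_left _ _

lemma PDA.Steps.trans {P : PDA Q Γ σ} {c c' c'' : Q × List Γ} {w w' : List σ} {h h' : ℕ}
    (h1 : P.Steps c w c' h) (h2 : P.Steps c' w' c'' h') :
    P.Steps c (w ++ w') c'' (max h h') := by
  induction h1 with
  | refl c =>
    rw [List.nil_append, max_eq_right h2.start_le]
    exact h2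
  | step ht ha hs ih =>
    rw [List.append_assoc, max_assoc]
    exact .step ht ha (ih h2)

lemma PDA.Steps.one {P : PDA Q Γ σ} {q q' : Q} {a : Option σ} {op : StackOp Γ}
    {s s' : List Γ} (ht : (q, a, op, q') ∈ P.trans) (ha : op.apply s s') :
    P.Steps (q, s) a.toList (q', s') (max s.length s'.length) := by
  simpa using PDA.Steps.step ht ha (.refl (q', s'))

/-- Transport a PDA along a bijection of state spaces. -/
def PDA.map (e : Q ≃ Q') (P : PDA Q Γ σ) : PDA Q' Γ σ where
  trans := {t | (e.symm t.1, t.2.1, t.2.2.1, e.symm t.2.2.2) ∈ P.trans}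
  start := e P.start
  final := e '' P.final

lemma PDA.Steps.map {P : PDA Q Γ σ} (e : Q ≃ Q') {c c' : Q × List Γ} {w : List σ} {h : ℕ}
    (hs : P.Steps c w c' h) :
    (P.map e).Steps (e c.1, c.2) w (e c'.1, c'.2) h := by
  induction hs with
  | refl c => exact .refl _
  | step ht ha hs ih =>
    exact .step (show _ ∈ (P.map e).trans by simpa [PDA.map] using ht) ha ih

lemma PDA.Steps.of_map {P : PDA Q Γ σ} (e : Q ≃ Q') {c c' : Q' × List Γ} {w : List σ} {h : ℕ}
    (hs : (P.map e).Steps c w c' h) :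
    P.Steps (e.symm c.1, c.2) w (e.symm c'.1, c'.2) h := by
  induction hs with
  | refl c => exact .refl _
  | step ht ha hs ih => exact .step ht ha ih

lemma PDA.map_language {P : PDA Q Γ σ} (e : Q ≃ Q') :
    (P.map e).language = P.language := by
  ext w
  constructor
  · rintro ⟨f, ⟨f0, hf0, rfl⟩, h, hs⟩
    have := hs.of_map e
    simp only [PDA.map, Equiv.symm_apply_apply] at this
    exact ⟨f0, hf0, h, this⟩
  · rintro ⟨f, hf, h, hs⟩
    exact ⟨e f, ⟨f, hf, rfl⟩, h, hs.map e⟩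

end Aux

section Construction

/-- The state space of our PDA: `D` states, `U` states, `T` states and one `E` state. -/
abbrev QSt (n : ℕ) : Type := Fin (n + 1) ⊕ (Fin (n + 1) ⊕ (Fin n ⊕ Unit))

def stD (n : ℕ) (k : Fin (n + 1)) : QSt n := Sum.inl k
def stU (n : ℕ) (k : Fin (n + 1)) : QSt n := Sum.inr (Sum.inl k)
def stT (n : ℕ) (k : Fin n) : QSt n := Sum.inr (Sum.inr (Sum.inl k))
def stE (n : ℕ) : QSt n := Sum.inr (Sum.inr (Sum.inr ()))

/-- The counting PDA. -/
def cPDA (n : ℕ) (Γ₂ : Type) : PDA (QSt n) (Fin 2) Γ₂ where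
  trans := {t |
    (∃ k : Fin n, t = (stD n k.succ, none, .push 0, stD n k.castSucc)) ∨
    (∃ a : Γ₂, t = (stD n 0, some a, .nop, stE n)) ∨
    (∃ a : Γ₂, t = (stE n, some a, .nop, stU n 0)) ∨
    (∃ k : Fin n, t = (stU n k.castSucc, none, .pop 0, stT n k)) ∨
    (∃ k : Fin n, t = (stT n k, none, .push 1, stD n k.castSucc)) ∨
    (∃ k : Fin n, t = (stU n k.castSucc, none, .pop 1, stU n k.succ))}
  start := stD n (Fin.last n)
  final := {stU n (Fin.last n)}

/-- Letters remaining to be read due to pending markers on the stack, when the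
stack top corresponds to level `ℓ + 1`. -/
def restAt : ℕ → List (Fin 2) → ℕ
  | _, [] => 0
  | ℓ, b :: s => (if b = 0 then 2 ^ (ℓ + 1) else 0) + restAt (ℓ + 1) s

/-- Letters remaining to be read from a configuration. -/
def mu (n : ℕ) : QSt n × List (Fin 2) → ℕ
  | (Sum.inl k, s) => 2 ^ ((k : ℕ) + 1) + restAt k s
  | (Sum.inr (Sum.inl k), s) => restAt k s
  | (Sum.inr (Sum.inr (Sum.inl k)), s) => 2 ^ ((k : ℕ) + 1) + restAt ((k : ℕ) + 1) s
  | (Sum.inr (Sum.inr (Sum.inr _)), s) => 1 + restAt 0 s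

/-- Invariant on stack lengths. -/
def inv (n : ℕ) : QSt n × List (Fin 2) → Prop
  | (Sum.inl k, s) => s.length = n - (k : ℕ)
  | (Sum.inr (Sum.inl k), s) => s.length = n - (k : ℕ)
  | (Sum.inr (Sum.inr (Sum.inl k)), s) => s.length = n - ((k : ℕ) + 1)
  | (Sum.inr (Sum.inr (Sum.inr _)), s) => s.length = n

lemma cPDA_sound (n : ℕ) (Γ₂ : Type) {c c' : QSt n × List (Fin 2)} {w : List Γ₂} {h : ℕ}
    (hs : (cPDA n Γ₂).Steps c w c' h) (hc' : c' = (stU n (Fin.last n), [])) :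
    inv n c → w.length = mu n c ∧ h ≤ n := by
  induction hs with
  | refl c =>
    subst hc'
    intro _
    simp [mu, stU, restAt]
  | @step q q' a op s s' w c h ht ha hs ih =>
    intro hinv
    have ih := ih hc'
    simp only [cPDA, Set.mem_setOf_eq] at ht
    rcases ht with ⟨k, heq⟩ | ⟨b, heq⟩ | ⟨b, heq⟩ | ⟨k, heq⟩ | ⟨k, heq⟩ | ⟨k, heq⟩ <;>
      simp only [Prod.mk.injEq] at heq <;>
      obtain ⟨rfl, rfl, rfl, rfl⟩ := heq
    · -- D (k+1) --push 0--> D k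
      simp only [StackOp.apply] at ha; subst ha
      simp only [inv, stD, Fin.val_succ, Fin.coe_castSucc] at hinv ⊢
      have hk := k.isLt
      have hinv' : inv n (stD n k.castSucc, (0 : Fin 2) :: s) := by
        simp only [inv, stD, Fin.coe_castSucc, List.length_cons]; omega
      obtain ⟨hlen, hle⟩ := ih hinv'
      constructor
      · simp only [Option.toList, List.nil_append, hlen, mu, stD, Fin.val_succ,
          Fin.coe_castSucc, restAt, if_pos rfl, if_true, pow_succ]
        omega
      · simp only [max_le_iff]
        exact ⟨by omega, hle⟩
    · -- D 0 --read--> E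
      simp only [StackOp.apply] at ha; subst ha
      simp only [inv, stD, stE, Fin.val_zero] at hinv
      have hinv' : inv n (stE n, s') := by simp only [inv, stE]; omega
      obtain ⟨hlen, hle⟩ := ih hinv'
      constructor
      · simp only [Option.toList, List.singleton_append, List.length_cons, hlen, mu, stD, stE,
          Fin.val_zero, restAt]
        ring
      · simp only [max_le_iff]
        exact ⟨by omega, hle⟩
    · -- E --read--> U 0
      simp only [StackOp.apply] at ha; subst ha
      simp only [inv, stE] at hinv
      have hinv' : inv n (stU n 0, s') := by simp only [inv, stU, Fin.val_zero]; omega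
      obtain ⟨hlen, hle⟩ := ih hinv'
      constructor
      · simp only [Option.toList, List.singleton_append, List.length_cons, hlen, mu, stU, stE,
          Fin.val_zero]
        ring
      · simp only [max_le_iff]
        exact ⟨by omega, hle⟩
    · -- U k (top 0) --pop 0--> T k
      simp only [StackOp.apply] at ha; subst ha
      have hk := k.isLt
      simp only [inv, stU, stT, Fin.coe_castSucc, List.length_cons] at hinv
      have hinv' : inv n (stT n k, s') := by simp only [inv, stT]; omega
      obtain ⟨hlen, hle⟩ := ih hinv'
      constructor
      · simp only [Option.toList, List.nil_append, hlen, mu, stU, stT, Fin.coe_castSucc,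
          restAt, if_pos rfl, if_true]
      · simp only [max_le_iff, List.length_cons]
        exact ⟨by omega, hle⟩
    · -- T k --push 1--> D k
      simp only [StackOp.apply] at ha; subst ha
      have hk := k.isLt
      simp only [inv, stT, stD] at hinv
      have hinv' : inv n (stD n k.castSucc, (1 : Fin 2) :: s) := by
        simp only [inv, stD, Fin.coe_castSucc, List.length_cons]; omega
      obtain ⟨hlen, hle⟩ := ih hinv'
      constructor
      · simp only [Option.toList, List.nil_append, hlen, mu, stT, stD, Fin.coe_castSucc,
          restAt, if_neg (by decide : ¬ (1 : Fin 2) = 0)]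
        ring
      · simp only [max_le_iff]
        exact ⟨by omega, hle⟩
    · -- U k (top 1) --pop 1--> U (k+1)
      simp only [StackOp.apply] at ha; subst ha
      have hk := k.isLt
      simp only [inv, stU, Fin.coe_castSucc, List.length_cons] at hinv
      have hinv' : inv n (stU n k.succ, s') := by simp only [inv, stU, Fin.val_succ]; omega
      obtain ⟨hlen, hle⟩ := ih hinv'
      constructor
      · simp only [Option.toList, List.nil_append, hlen, mu, stU, Fin.coe_castSucc,
          Fin.val_succ, restAt, if_neg (by decide : ¬ (1 : Fin 2) = 0), zero_add]
      · simp only [max_le_iff, List.length_cons]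
        exact ⟨by omega, hle⟩

lemma cPDA_complete (n : ℕ) (Γ₂ : Type) :
    ∀ k : ℕ, ∀ hk : k ≤ n, ∀ s : List (Fin 2), s.length = n - k →
      ∀ w : List Γ₂, w.length = 2 ^ (k + 1) →
      ∃ h, (cPDA n Γ₂).Steps (stD n ⟨k, by omega⟩, s) w (stU n ⟨k, by omega⟩, s) h := by
  intro k
  induction k with
  | zero =>
    intro hk s hslen w hw
    obtain ⟨a, b, rfl⟩ := List.length_eq_two.mp (by simpa using hw)
    have h0 : (⟨0, by omega⟩ : Fin (n + 1)) = 0 := by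
      apply Fin.ext; simp
    rw [h0]
    have t2 : (stD n (0 : Fin (n+1)), some a, StackOp.nop (Γ := Fin 2), stE n) ∈
        (cPDA n Γ₂).trans := Or.inr (Or.inl ⟨a, rfl⟩)
    have t3 : (stE n, some b, StackOp.nop (Γ := Fin 2), stU n (0 : Fin (n+1))) ∈
        (cPDA n Γ₂).trans := Or.inr (Or.inr (Or.inl ⟨b, rfl⟩))
    have run := PDA.Steps.step t2 (show s = s from rfl)
      (PDA.Steps.step t3 (show s = s from rfl)
        (PDA.Steps.refl (stU n (0 : Fin (n + 1)), s)))
    simp only [Option.toList_some, List.append_nil, List.singleton_append] at run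
    exact ⟨_, run⟩
  | succ k ih =>
    intro hk s hslen w hw
    have hkn : k < n := hk
    set w1 := w.take (2 ^ (k + 1)) with hw1
    set w2 := w.drop (2 ^ (k + 1)) with hw2
    have hw1len : w1.length = 2 ^ (k + 1) := by
      simp [hw1, hw, pow_succ]
      all_goals omega
    have hw2len : w2.length = 2 ^ (k + 1) := by
      simp [hw2, hw, pow_succ]
      all_goals omega
    obtain ⟨h1, run1⟩ := ih (le_of_lt hkn) ((0 : Fin 2) :: s)
      (by simp [hslen]; omega) w1 hw1len
    obtain ⟨h2, run2⟩ := ih (le_of_lt hkn) ((1 : Fin 2) :: s)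
      (by simp [hslen]; omega) w2 hw2len
    have t1 : (stD n (Fin.succ ⟨k, hkn⟩), (none : Option Γ₂), StackOp.push (0 : Fin 2),
        stD n (Fin.castSucc ⟨k, hkn⟩)) ∈ (cPDA n Γ₂).trans := Or.inl ⟨⟨k, hkn⟩, rfl⟩
    have t4 : (stU n (Fin.castSucc ⟨k, hkn⟩), (none : Option Γ₂), StackOp.pop (0 : Fin 2),
        stT n ⟨k, hkn⟩) ∈ (cPDA n Γ₂).trans :=
      Or.inr (Or.inr (Or.inr (Or.inl ⟨⟨k, hkn⟩, rfl⟩)))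
    have t5 : (stT n ⟨k, hkn⟩, (none : Option Γ₂), StackOp.push (1 : Fin 2),
        stD n (Fin.castSucc ⟨k, hkn⟩)) ∈ (cPDA n Γ₂).trans :=
      Or.inr (Or.inr (Or.inr (Or.inr (Or.inl ⟨⟨k, hkn⟩, rfl⟩))))
    have t6 : (stU n (Fin.castSucc ⟨k, hkn⟩), (none : Option Γ₂), StackOp.pop (1 : Fin 2),
        stU n (Fin.succ ⟨k, hkn⟩)) ∈ (cPDA n Γ₂).trans :=
      Or.inr (Or.inr (Or.inr (Or.inr (Or.inr ⟨⟨k, hkn⟩, rfl⟩))))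
    have tail := PDA.Steps.step t6
      (show ((1 : Fin 2) :: s) = (1 : Fin 2) :: s from rfl)
      (PDA.Steps.refl ((stU n (Fin.succ ⟨k, hkn⟩)), s))
    have mid := PDA.Steps.step t4
      (show ((0 : Fin 2) :: s) = (0 : Fin 2) :: s from rfl)
      (PDA.Steps.step t5 (show ((1 : Fin 2) :: s) = (1 : Fin 2) :: s from rfl)
        (run2.trans tail))
    have big := PDA.Steps.step t1
      (show ((0 : Fin 2) :: s) = (0 : Fin 2) :: s from rfl)
      (run1.trans mid)
    simp only [Option.toList_none, List.nil_append, List.append_nil] at big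
    rw [hw1, hw2, List.take_append_drop] at big
    exact ⟨_, big⟩

end Construction

/-- for every `n ≥ 1` there is a PDA with `3n+3` states and two stack
symbols accepting exactly the words of length `2^(n+1)` over the input alphabet `Γ₂`,
with stack height never exceeding `n` along any accepting run. -/
theorem exists_pda_counting_exp_succ (n : ℕ) (hn : 1 ≤ n) (Γ₂ : Type) :
    ∃ P : PDA (Fin (3 * n + 3)) (Fin 2) Γ₂,
      P.language = {w : List Γ₂ | w.length = 2 ^ (n + 1)} ∧
      ∀ (w : List Γ₂) (f : Fin (3 * n + 3)) (h : ℕ),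
        f ∈ P.final → P.Steps (P.start, []) w (f, []) h → h ≤ n := by
  have e : QSt n ≃ Fin (3 * n + 3) := by
    apply Fintype.equivFinOfCardEq
    simp [QSt]
    omega
  refine ⟨(cPDA n Γ₂).map e, ?_, ?_⟩
  · rw [PDA.map_language]
    ext w
    constructor
    · rintro ⟨f, hf, h, hs⟩
      have hinv : inv n (stD n (Fin.last n), []) := by simp [inv, stD]
      have hf' : f = stU n (Fin.last n) := hf
      subst hf'
      obtain ⟨hlen, -⟩ := cPDA_sound n Γ₂ hs rfl hinv
      simp only [Set.mem_setOf_eq, hlen, cPDA, mu, stD, stU, Fin.val_last, restAt]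
      all_goals omega
    · intro hw
      obtain ⟨h, hs⟩ := cPDA_complete n Γ₂ n le_rfl [] (by simp) w hw
      refine ⟨stU n (Fin.last n), rfl, h, ?_⟩
      have : (⟨n, by omega⟩ : Fin (n + 1)) = Fin.last n := rfl
      simpa [cPDA, this] using hs
  · rintro w f h ⟨f0, hf0, rfl⟩ hs
    have hs' := hs.of_map e
    simp only [PDA.map, Equiv.symm_apply_apply] at hs'
    have hf0' : f0 = stU n (Fin.last n) := hf0
    subst hf0'
    have hinv : inv n (stD n (Fin.last n), []) := by simp [inv, stD]
    exact (cPDA_sound n Γ₂ hs' rfl hinv).2
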